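/- Let E be a finite set, d ≥ 1 with |E| ≥ d+2 and |E| ≢ d (mod 2), and let φ be a generic symmetric or a generic antisymmetric function on the injective (d+1)-tuples of E. Then the Orchard relations ∼_φ and ∼_{Aφ} coincide on E. -/

import Mathlib

open Finset

/-- A function on `d`-tuples is symmetric if it is invariant under all
permutations of the index set. -/
def IsSymmetricFn {E : Type*} {d : ℕ} (φ : (Fin d → E) → ℝ) : Prop :=
  ∀ (x : Fin d → E) (σ : Equiv.Perm (Fin d)), φ (x ∘ σ) = φ x

/-- A function on `d`-tuples is antisymmetric if permuting the entries by `σ`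
multiplies the value by `sign σ`. -/
def IsAntisymmetricFn {E : Type*} {d : ℕ} (φ : (Fin d → E) → ℝ) : Prop :=
  ∀ (x : Fin d → E) (σ : Equiv.Perm (Fin d)),
    φ (x ∘ σ) = ((Equiv.Perm.sign σ : ℤ) : ℝ) * φ x

/-- A function on `d`-tuples is generic if it does not vanish on any injective tuple. -/
def IsGenericFn {E : Type*} {d : ℕ} (φ : (Fin d → E) → ℝ) : Prop :=
  ∀ x : Fin d → E, Function.Injective x → φ x ≠ 0

/-- A `d`-element subset `s` (not containing `a`, `b`) separates `a` from `b`
with respect to `φ` if `φ(x₁,…,x_d,a) * φ(x₁,…,x_d,b) < 0` for some (equivalently,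
for symmetric or antisymmetric `φ`, any) enumeration `x` of `s`. -/
def Separates {E : Type*} [DecidableEq E] {d : ℕ} (φ : (Fin (d + 1) → E) → ℝ)
    (s : Finset E) (a b : E) : Prop :=
  ∃ x : Fin d → E, Function.Injective x ∧ Finset.image x Finset.univ = s ∧
    φ (Fin.snoc x a) * φ (Fin.snoc x b) < 0

/-- `sepCount φ a b` is the number `n_φ(a,b)` of `d`-subsets of `E \ {a,b}`
separating `a` from `b`. -/
noncomputable def sepCount {E : Type*} [DecidableEq E] {d : ℕ}
    (φ : (Fin (d + 1) → E) → ℝ) (a b : E) : ℕ :=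
  Set.ncard {s : Finset E | s.card = d ∧ a ∉ s ∧ b ∉ s ∧ Separates φ s a b}

/-- The Orchard relation of a generic symmetric function. -/
def OrchardSym {E : Type*} [DecidableEq E] {d : ℕ}
    (φ : (Fin (d + 1) → E) → ℝ) (x y : E) : Prop :=
  x = y ∨ sepCount φ x y % 2 = 0

/-- The Orchard relation of a generic antisymmetric function. -/
def OrchardAnti {E : Type*} [Fintype E] [DecidableEq E] {d : ℕ}
    (φ : (Fin (d + 1) → E) → ℝ) (x y : E) : Prop :=
  x = y ∨ sepCount φ x y % 2 = Nat.choose (Fintype.card E - 3) (d - 1) % 2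

/-- Two generic functions are flip-related with flip set `F` if their product is
negative on tuples enumerating `F` and positive on all other injective tuples. -/
def FlipRelated {E : Type*} [DecidableEq E] {d : ℕ}
    (φ ψ : (Fin (d + 1) → E) → ℝ) (F : Finset E) : Prop :=
  ∀ x : Fin (d + 1) → E, Function.Injective x →
    (Finset.image x Finset.univ = F → φ x * ψ x < 0) ∧
    (Finset.image x Finset.univ ≠ F → 0 < φ x * ψ x)

/-- `Rmap φ (x₁,…,x_d) = ∏_{x ∈ E∖{x₁,…,x_d}} φ(x,x₁,…,x_d)`. -/
noncomputable def Rmap {E : Type*} [Fintype E] [DecidableEq E] {d : ℕ}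
    (φ : (Fin (d + 1) → E) → ℝ) : (Fin d → E) → ℝ :=
  fun x => ∏ y ∈ Finset.univ \ Finset.image x Finset.univ, φ (Fin.cons y x)

/-- `Amap φ (x₀,…,x_{d+1}) = ∏_{i=0}^{d+1} φ(x₀,…,x_{i-1},x_{i+1},…,x_{d+1})`. -/
noncomputable def Amap {E : Type*} {d : ℕ}
    (φ : (Fin (d + 1) → E) → ℝ) : (Fin (d + 2) → E) → ℝ :=
  fun x => ∏ i : Fin (d + 2), φ (x ∘ Fin.succAbove i)

/-- `muCount φ x` is the number of `d`-subsets `{x₁,…,x_d} ⊆ E∖{x}` with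
`φ(x,x₁,…,x_d) > 0`. -/
noncomputable def muCount {E : Type*} [DecidableEq E] {d : ℕ}
    (φ : (Fin (d + 1) → E) → ℝ) (x : E) : ℕ :=
  Set.ncard {s : Finset E | s.card = d ∧ x ∉ s ∧
    ∃ t : Fin d → E, Function.Injective t ∧ Finset.image t Finset.univ = s ∧
      0 < φ (Fin.cons x t)}

-- quasi-symmetric
def QS {E : Type*} {k : ℕ} (φ : (Fin k → E) → ℝ) : Prop :=
  ∀ σ : Equiv.Perm (Fin k), ∃ ε : ℝ, (ε = 1 ∨ ε = -1) ∧ ∀ y, φ (y ∘ σ) = ε * φ y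

lemma qs_of_sym {E : Type*} {k : ℕ} {φ : (Fin k → E) → ℝ} (h : IsSymmetricFn φ) : QS φ :=
  fun σ => ⟨1, Or.inl rfl, fun y => by rw [h y σ, one_mul]⟩

lemma qs_of_anti {E : Type*} {k : ℕ} {φ : (Fin k → E) → ℝ} (h : IsAntisymmetricFn φ) : QS φ := by
  intro σ
  refine ⟨((Equiv.Perm.sign σ : ℤ) : ℝ), ?_, fun y => h y σ⟩
  rcases Int.units_eq_one_or (Equiv.Perm.sign σ) with h1 | h1 <;> simp [h1]

-- extend a perm of Fin d to Fin (d+1) fixing last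
def extPerm {d : ℕ} (τ : Equiv.Perm (Fin d)) : Equiv.Perm (Fin (d + 1)) where
  toFun := Fin.lastCases (Fin.last d) (fun j => (τ j).castSucc)
  invFun := Fin.lastCases (Fin.last d) (fun j => (τ.symm j).castSucc)
  left_inv := by
    intro i
    induction i using Fin.lastCases with
    | last => simp
    | cast j => simp
  right_inv := by
    intro i
    induction i using Fin.lastCases with
    | last => simp
    | cast j => simp

lemma snoc_comp_extPerm {E : Type*} {d : ℕ} (x : Fin d → E) (a : E) (τ : Equiv.Perm (Fin d)) :
    (Fin.snoc x a : Fin (d+1) → E) ∘ (extPerm τ) = Fin.snoc (x ∘ τ) a := by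
  funext i
  induction i using Fin.lastCases with
  | last => simp [extPerm]
  | cast j => simp [extPerm]

-- same image injective tuples differ by a perm
lemma exists_perm_comp {E : Type*} [DecidableEq E] {d : ℕ} {x x' : Fin d → E} (hx : Function.Injective x)
    (hx' : Function.Injective x') (him : Finset.image x Finset.univ = Finset.image x' Finset.univ) :
    ∃ τ : Equiv.Perm (Fin d), x ∘ τ = x' := by
  have hr : Set.range x = Set.range x' := by
    have := congrArg (fun s : Finset E => (s : Set E)) him
    simpa [Finset.coe_image, Set.image_univ] using this
  refine ⟨(Equiv.ofInjective x' hx').trans ((Equiv.setCongr hr.symm).trans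
    (Equiv.ofInjective x hx).symm), ?_⟩
  funext j
  simp only [Function.comp_apply, Equiv.trans_apply, Equiv.setCongr, Equiv.subtypeEquivProp]
  exact Equiv.apply_ofInjective_symm hx _
section Test
example : True := trivial
end Test

lemma sep_prod_eq {E : Type*} [DecidableEq E] {d : ℕ} {φ : (Fin (d + 1) → E) → ℝ}
    (hqs : QS φ) {x x' : Fin d → E} (hx : Function.Injective x) (hx' : Function.Injective x')
    (him : Finset.image x Finset.univ = Finset.image x' Finset.univ) (a b : E) :
    φ (Fin.snoc x' a) * φ (Fin.snoc x' b) = φ (Fin.snoc x a) * φ (Fin.snoc x b) := by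
  obtain ⟨τ, hτ⟩ := exists_perm_comp hx hx' him
  obtain ⟨ε, hε, hφ⟩ := hqs (extPerm τ)
  have ha : φ (Fin.snoc x' a) = ε * φ (Fin.snoc x a) := by
    rw [← hτ, ← snoc_comp_extPerm, hφ]
  have hb : φ (Fin.snoc x' b) = ε * φ (Fin.snoc x b) := by
    rw [← hτ, ← snoc_comp_extPerm, hφ]
  have hε2 : ε * ε = 1 := by rcases hε with h | h <;> rw [h] <;> ring
  rw [ha, hb, show (ε * φ (Fin.snoc x a)) * (ε * φ (Fin.snoc x b))
      = (ε*ε) * (φ (Fin.snoc x a) * φ (Fin.snoc x b)) from by ring, hε2, one_mul]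

-- Separates is enumeration-independent
lemma separates_iff_enum {E : Type*} [DecidableEq E] {d : ℕ} {φ : (Fin (d + 1) → E) → ℝ}
    (hqs : QS φ) {s : Finset E} {x : Fin d → E} (hx : Function.Injective x)
    (him : Finset.image x Finset.univ = s) (a b : E) :
    Separates φ s a b ↔ φ (Fin.snoc x a) * φ (Fin.snoc x b) < 0 := by
  constructor
  · rintro ⟨x', hx', him', hlt⟩
    rw [sep_prod_eq hqs hx' hx (him'.trans him.symm) a b]
    exact hlt
  · intro h; exact ⟨x, hx, him, h⟩

lemma snoc_comp_succAbove {E : Type*} {d : ℕ} (x : Fin (d + 1) → E) (a : E) (j : Fin (d + 1)) :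
    (Fin.snoc x a : Fin (d+2) → E) ∘ (Fin.succAbove j.castSucc) =
      Fin.snoc (x ∘ Fin.succAbove j) a := by
  funext k
  induction k using Fin.lastCases with
  | last =>
    simp only [Function.comp_apply, Fin.snoc_last]
    rw [Fin.succAbove_castSucc_of_le _ _ (Fin.le_last j), Fin.succ_last, Fin.snoc_last]
  | cast k =>
    simp only [Function.comp_apply, Fin.snoc_castSucc]
    rw [Fin.castSucc_succAbove_castSucc, Fin.snoc_castSucc]

lemma Amap_snoc {E : Type*} {d : ℕ} (φ : (Fin (d + 1) → E) → ℝ) (x : Fin (d + 1) → E) (a : E) :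
    Amap φ (Fin.snoc x a) =
      φ x * ∏ j : Fin (d + 1), φ (Fin.snoc (x ∘ Fin.succAbove j) a) := by
  rw [Amap, Fin.prod_univ_castSucc, mul_comm (φ x)]
  congr 1
  · exact Finset.prod_congr rfl fun j _ => by rw [snoc_comp_succAbove]
  · congr 1
    funext k
    simp [Fin.succAbove_last]

lemma prod_neg_iff_odd {ι : Type*} [DecidableEq ι] (f : ι → ℝ) (s : Finset ι)
    (hf : ∀ i ∈ s, f i ≠ 0) :
    (∏ i ∈ s, f i) < 0 ↔ Odd (s.filter (fun i => f i < 0)).card := by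
  classical
  induction s using Finset.induction_on with
  | empty => simp
  | insert x s' hx ih =>
    have hfx : f x ≠ 0 := hf x (Finset.mem_insert_self x s')
    have hf' : ∀ i ∈ s', f i ≠ 0 := fun i hi => hf i (Finset.mem_insert_of_mem hi)
    have hps' : (∏ i ∈ s', f i) ≠ 0 := Finset.prod_ne_zero_iff.2 hf'
    rw [Finset.prod_insert hx, Finset.filter_insert]
    rcases lt_or_gt_of_ne hfx with hneg | hpos
    · rw [if_pos hneg, Finset.card_insert_of_notMem (fun h => hx (Finset.mem_of_mem_filter x h))]
      rw [Nat.odd_add_one, Nat.not_odd_iff_even, ← Nat.not_odd_iff_even, ← ih hf']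
      constructor
      · intro h hps
        exact absurd h (not_lt.2 (le_of_lt (mul_pos_of_neg_of_neg hneg hps)))
      · intro h
        rcases hps'.lt_or_gt with h2 | h2
        · exact absurd h2 h
        · exact mul_neg_of_neg_of_pos hneg h2
    · rw [if_neg (not_lt.2 (le_of_lt hpos)), ← ih hf']
      constructor
      · intro h
        rcases hps'.lt_or_gt with h2 | h2
        · exact h2
        · exact absurd h (not_lt.2 (le_of_lt (mul_pos hpos h2)))
      · intro h
        exact mul_neg_of_pos_of_neg hpos h

lemma exists_enum {E : Type*} [DecidableEq E] {n : ℕ} {s : Finset E} (hs : s.card = n) :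
    ∃ x : Fin n → E, Function.Injective x ∧ Finset.image x Finset.univ = s := by
  obtain ⟨e⟩ : Nonempty (Fin n ≃ {x // x ∈ s}) := ⟨(s.equivFin.trans (finCongr hs)).symm⟩
  refine ⟨fun i => (e i : E), fun i j h => e.injective (Subtype.ext h), ?_⟩
  ext y
  simp only [Finset.mem_image, Finset.mem_univ, true_and]
  constructor
  · rintro ⟨i, rfl⟩; exact (e i).2
  · intro hy; exact ⟨e.symm ⟨y, hy⟩, by simp⟩

lemma snoc_injective {E : Type*} [DecidableEq E] {n : ℕ} {x : Fin n → E} {a : E}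
    (hx : Function.Injective x) (ha : a ∉ Finset.image x Finset.univ) :
    Function.Injective (Fin.snoc x a : Fin (n+1) → E) := by
  have hax : ∀ i, x i ≠ a := fun i h => ha (Finset.mem_image.2 ⟨i, Finset.mem_univ i, h⟩)
  intro i j h
  induction i using Fin.lastCases with
  | last =>
    induction j using Fin.lastCases with
    | last => rfl
    | cast j => rw [Fin.snoc_last, Fin.snoc_castSucc] at h; exact absurd h.symm (hax j)
  | cast i =>
    induction j using Fin.lastCases with
    | last => rw [Fin.snoc_last, Fin.snoc_castSucc] at h; exact absurd h (hax i)
    | cast j => rw [Fin.snoc_castSucc, Fin.snoc_castSucc] at h; exact congrArg _ (hx h)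

lemma image_comp_succAbove {E : Type*} [DecidableEq E] {n : ℕ} {x : Fin (n+1) → E}
    (hx : Function.Injective x) (j : Fin (n + 1)) :
    Finset.image (x ∘ Fin.succAbove j) Finset.univ = (Finset.image x Finset.univ).erase (x j) := by
  ext e
  simp only [Finset.mem_image, Finset.mem_univ, true_and, Finset.mem_erase, Function.comp_apply]
  constructor
  · rintro ⟨k, rfl⟩
    exact ⟨fun h => Fin.succAbove_ne j k (hx h), ⟨j.succAbove k, rfl⟩⟩
  · rintro ⟨hne, i, rfl⟩
    obtain ⟨k, hk⟩ := Fin.exists_succAbove_eq (fun h : i = j => hne (congrArg x h))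
    exact ⟨k, by rw [hk]⟩

open scoped Classical

lemma separates_Amap_iff {E : Type*} [DecidableEq E] {d : ℕ} {φ : (Fin (d + 1) → E) → ℝ}
    (hqs : QS φ) (hgen : IsGenericFn φ) {S : Finset E} (hS : S.card = d + 1) {a b : E}
    (ha : a ∉ S) (hb : b ∉ S) :
    Separates (Amap φ) S a b ↔
      Odd (((S.powersetCard d).filter (fun T => Separates φ T a b)).card) := by
  classical
  have key : ∀ x : Fin (d + 1) → E, Function.Injective x → Finset.image x Finset.univ = S →
      (Amap φ (Fin.snoc x a) * Amap φ (Fin.snoc x b) < 0 ↔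
        Odd (((S.powersetCard d).filter (fun T => Separates φ T a b)).card)) := by
    intro x hx him
    have hax : a ∉ Finset.image x Finset.univ := him ▸ ha
    have hbx : b ∉ Finset.image x Finset.univ := him ▸ hb
    -- each sub-tuple is injective with image S.erase (x j)
    have hsub : ∀ j : Fin (d + 1), Function.Injective (x ∘ Fin.succAbove j) :=
      fun j => hx.comp (Fin.succAbove_right_injective)
    have hsubim : ∀ j, Finset.image (x ∘ Fin.succAbove j) Finset.univ = S.erase (x j) :=
      fun j => by rw [image_comp_succAbove hx, him]
    set P : Fin (d + 1) → ℝ :=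
      fun j => φ (Fin.snoc (x ∘ Fin.succAbove j) a) * φ (Fin.snoc (x ∘ Fin.succAbove j) b) with hP
    have hPne : ∀ j ∈ (Finset.univ : Finset (Fin (d+1))), P j ≠ 0 := by
      intro j _
      have h1 : a ∉ Finset.image (x ∘ Fin.succAbove j) Finset.univ := by
        rw [hsubim]; exact fun h => ha (Finset.mem_of_mem_erase h)
      have h2 : b ∉ Finset.image (x ∘ Fin.succAbove j) Finset.univ := by
        rw [hsubim]; exact fun h => hb (Finset.mem_of_mem_erase h)
      exact mul_ne_zero (hgen _ (snoc_injective (hsub j) h1)) (hgen _ (snoc_injective (hsub j) h2))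
    have hfactor : Amap φ (Fin.snoc x a) * Amap φ (Fin.snoc x b) =
        (φ x * φ x) * ∏ j : Fin (d + 1), P j := by
      simp only [hP]; rw [Amap_snoc, Amap_snoc, Finset.prod_mul_distrib]; ring
    have hφx : 0 < φ x * φ x := by
      rcases (hgen x hx).lt_or_gt with h | h
      · exact mul_pos_of_neg_of_neg h h
      · exact mul_pos h h
    have step1 : Amap φ (Fin.snoc x a) * Amap φ (Fin.snoc x b) < 0 ↔
        (∏ j : Fin (d + 1), P j) < 0 := by
      rw [hfactor]
      constructor
      · intro h
        by_contra hge
        exact absurd h (not_lt.2 (mul_nonneg (le_of_lt hφx) (not_lt.1 hge)))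
      · intro h; exact mul_neg_of_pos_of_neg hφx h
    rw [step1, prod_neg_iff_odd _ _ hPne]
    -- convert j-count to T-count
    have hfil : (Finset.univ.filter (fun j => P j < 0)) =
        (Finset.univ.filter (fun j : Fin (d+1) => Separates φ (S.erase (x j)) a b)) := by
      apply Finset.filter_congr
      intro j _
      simp only [hP]
      rw [← separates_iff_enum hqs (hsub j) (hsubim j) a b]
    rw [hfil]
    have hcards : (Finset.univ.filter (fun j : Fin (d+1) => Separates φ (S.erase (x j)) a b)).card
        = ((S.powersetCard d).filter (fun T => Separates φ T a b)).card := by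
      apply Finset.card_bij (fun j _ => S.erase (x j))
      · intro j hj
        rw [Finset.mem_filter] at hj ⊢
        refine ⟨Finset.mem_powersetCard.2 ⟨Finset.erase_subset _ _, ?_⟩, hj.2⟩
        rw [Finset.card_erase_of_mem (him ▸ Finset.mem_image_of_mem x (Finset.mem_univ j)), hS]
        omega
      · intro i _ j _ hij
        have hxi : x i ∈ S := him ▸ Finset.mem_image_of_mem x (Finset.mem_univ i)
        by_contra hne
        have h1 : x i ≠ x j := fun h => hne (hx h)
        have h2 : x i ∈ S.erase (x j) := Finset.mem_erase.2 ⟨h1, hxi⟩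
        rw [← hij] at h2
        exact (Finset.notMem_erase _ _) h2
      · intro T hT
        rw [Finset.mem_filter, Finset.mem_powersetCard] at hT
        obtain ⟨⟨hTS, hTcard⟩, hTsep⟩ := hT
        have hne : (S \ T).Nonempty := by
          rw [← Finset.card_pos, Finset.card_sdiff_of_subset hTS, hS, hTcard]; omega
        obtain ⟨e, he⟩ := hne
        rw [Finset.mem_sdiff] at he
        obtain ⟨i, _, hi⟩ := Finset.mem_image.1 (him ▸ he.1 : e ∈ Finset.image x Finset.univ)
        have hET : S.erase (x i) = T := by
          rw [hi]
          apply (Finset.eq_of_subset_of_card_le ?_ ?_).symm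
          · intro t ht
            exact Finset.mem_erase.2 ⟨fun h => he.2 (h ▸ ht), hTS ht⟩
          · rw [Finset.card_erase_of_mem he.1, hS, hTcard]; omega
        exact ⟨i, Finset.mem_filter.2 ⟨Finset.mem_univ i, hET ▸ hTsep⟩, hET⟩
    rw [hcards]
  constructor
  · rintro ⟨x, hx, him, hlt⟩
    exact (key x hx him).1 hlt
  · intro h
    obtain ⟨x, hx, him⟩ := exists_enum hS
    exact ⟨x, hx, him, (key x hx him).2 h⟩

lemma sepCount_eq_card {E : Type*} [Fintype E] [DecidableEq E] {d : ℕ}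
    (φ : (Fin (d + 1) → E) → ℝ) (a b : E) :
    sepCount φ a b = (Finset.univ.filter
      (fun s : Finset E => s.card = d ∧ a ∉ s ∧ b ∉ s ∧ Separates φ s a b)).card := by
  rw [sepCount, Set.ncard_eq_toFinset_card']
  congr 1
  ext s
  simp [Set.mem_toFinset]

lemma sepCount_Amap_mod {E : Type*} [Fintype E] [DecidableEq E] {d : ℕ}
    {φ : (Fin (d + 1) → E) → ℝ} (hqs : QS φ) (hgen : IsGenericFn φ) {a b : E} (hab : a ≠ b) :
    sepCount (Amap φ) a b % 2 =
      (sepCount φ a b * (Fintype.card E - 2 - d)) % 2 := by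
  set m := Fintype.card E with hm
  set A : Finset (Finset E) := Finset.univ.filter
    (fun S : Finset E => S.card = d + 1 ∧ a ∉ S ∧ b ∉ S) with hA
  set B : Finset (Finset E) := Finset.univ.filter
    (fun T : Finset E => T.card = d ∧ a ∉ T ∧ b ∉ T ∧ Separates φ T a b) with hB
  set c : Finset E → ℕ :=
    fun S => ((S.powersetCard d).filter (fun T => Separates φ T a b)).card with hc
  -- Step 1
  have step1 : sepCount (Amap φ) a b = (A.filter (fun S => Odd (c S))).card := by
    rw [sepCount_eq_card]
    congr 1
    ext S
    simp only [hA, Finset.mem_filter, Finset.mem_univ, true_and, hc]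
    constructor
    · rintro ⟨h1, h2, h3, h4⟩
      exact ⟨⟨h1, h2, h3⟩, (separates_Amap_iff hqs hgen h1 h2 h3).1 h4⟩
    · rintro ⟨⟨h1, h2, h3⟩, h4⟩
      exact ⟨h1, h2, h3, (separates_Amap_iff hqs hgen h1 h2 h3).2 h4⟩
  -- Step 2
  have step2 : (A.filter (fun S => Odd (c S))).card % 2 = (∑ S ∈ A, c S) % 2 := by
    rw [Finset.card_filter, Finset.sum_nat_mod A 2 c]
    congr 1
    apply Finset.sum_congr rfl
    intro S _
    rcases Nat.even_or_odd (c S) with h | h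
    · rw [if_neg (by simpa [Nat.odd_iff, Nat.even_iff] using h), Nat.even_iff.1 h]
    · rw [if_pos h, Nat.odd_iff.1 h]
  -- Step 3 : double counting
  set Pairs : Finset (Finset E × Finset E) :=
    (A ×ˢ B).filter (fun p => p.2 ⊆ p.1) with hPairs
  have fib1 : ∀ S ∈ A, (Pairs.filter (fun p => p.1 = S)).card = c S := by
    intro S hS
    rw [hA, Finset.mem_filter] at hS
    obtain ⟨-, hS1, hS2, hS3⟩ := hS
    apply Finset.card_bij (fun p _ => p.2)
    · intro p hp
      rw [hPairs, Finset.mem_filter, Finset.mem_filter, Finset.mem_product] at hp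
      obtain ⟨⟨⟨hpA, hpB⟩, hsub⟩, hfst⟩ := hp
      rw [hB, Finset.mem_filter] at hpB
      rw [Finset.mem_filter, Finset.mem_powersetCard]
      exact ⟨⟨hfst ▸ hsub, hpB.2.1⟩, hpB.2.2.2.2⟩
    · intro p hp q hq hpq
      rw [Finset.mem_filter] at hp hq
      exact Prod.ext (hp.2.trans hq.2.symm) hpq
    · intro T hT
      rw [Finset.mem_filter, Finset.mem_powersetCard] at hT
      obtain ⟨⟨hTS, hTc⟩, hTsep⟩ := hT
      refine ⟨(S, T), ?_, rfl⟩
      rw [hPairs, Finset.mem_filter, Finset.mem_filter, Finset.mem_product]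
      refine ⟨⟨⟨Finset.mem_filter.2 ⟨Finset.mem_univ _, hS1, hS2, hS3⟩, ?_⟩, hTS⟩, rfl⟩
      rw [hB, Finset.mem_filter]
      exact ⟨Finset.mem_univ _, hTc, fun h => hS2 (hTS h), fun h => hS3 (hTS h), hTsep⟩
  have fib2 : ∀ T ∈ B, (Pairs.filter (fun p => p.2 = T)).card = m - 2 - d := by
    intro T hT
    rw [hB, Finset.mem_filter] at hT
    obtain ⟨-, hTc, hTa, hTb, hTsep⟩ := hT
    have hins : (insert a (insert b T)).card = d + 2 := by
      rw [Finset.card_insert_of_notMem (by simp [hab, hTa]),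
        Finset.card_insert_of_notMem hTb, hTc]
    have : (Finset.univ \ insert a (insert b T)).card =
        (Pairs.filter (fun p => p.2 = T)).card := by
      apply Finset.card_bij (fun e _ => ((insert e T : Finset E), T))
      · intro e he
        rw [Finset.mem_sdiff, Finset.mem_insert, Finset.mem_insert] at he
        push_neg at he
        obtain ⟨-, hea, heb, heT⟩ := he
        rw [Finset.mem_filter, hPairs, Finset.mem_filter, Finset.mem_product]
        refine ⟨⟨⟨?_, ?_⟩, Finset.subset_insert _ _⟩, rfl⟩
        · rw [hA, Finset.mem_filter]
          refine ⟨Finset.mem_univ _, ?_, ?_, ?_⟩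
          · rw [Finset.card_insert_of_notMem heT, hTc]
          · simp only [Finset.mem_insert]
            push_neg
            exact ⟨fun h => hea h.symm, hTa⟩
          · simp only [Finset.mem_insert]
            push_neg
            exact ⟨fun h => heb h.symm, hTb⟩
        · rw [hB, Finset.mem_filter]
          exact ⟨Finset.mem_univ _, hTc, hTa, hTb, hTsep⟩
      · intro e he e' he' hee
        rw [Finset.mem_sdiff, Finset.mem_insert, Finset.mem_insert] at he he'
        push_neg at he he'
        have hfst : insert e T = insert e' T := congrArg Prod.fst hee
        have h1 : e ∈ insert e' T := hfst ▸ Finset.mem_insert_self e T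
        rcases Finset.mem_insert.1 h1 with h | h
        · exact h
        · exact absurd h he.2.2.2
      · intro p hp
        rw [Finset.mem_filter, hPairs, Finset.mem_filter, Finset.mem_product] at hp
        obtain ⟨⟨⟨hpA, hpB⟩, hsub⟩, hsnd⟩ := hp
        rw [hA, Finset.mem_filter] at hpA
        obtain ⟨-, hc1, hc2, hc3⟩ := hpA
        subst hsnd
        have hcard1 : (p.1 \ p.2).card = 1 := by
          rw [Finset.card_sdiff_of_subset hsub, hc1, hTc]
          omega
        obtain ⟨e, hee⟩ := Finset.card_eq_one.1 hcard1
        have heP : e ∈ p.1 \ p.2 := hee ▸ Finset.mem_singleton_self e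
        rw [Finset.mem_sdiff] at heP
        refine ⟨e, ?_, ?_⟩
        · rw [Finset.mem_sdiff, Finset.mem_insert, Finset.mem_insert]
          push_neg
          exact ⟨Finset.mem_univ _, fun h => hc2 (h ▸ heP.1), fun h => hc3 (h ▸ heP.1), heP.2⟩
        · have : insert e p.2 = p.1 := by
            apply Finset.eq_of_subset_of_card_le
            · intro t ht
              rcases Finset.mem_insert.1 ht with h | h
              · exact h ▸ heP.1
              · exact hsub h
            · rw [Finset.card_insert_of_notMem heP.2, hc1, hTc]
          rw [this]
    rw [← this, Finset.card_sdiff_of_subset (Finset.subset_univ _), hins, Finset.card_univ, ← hm]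
    omega
  have step3 : (∑ S ∈ A, c S) = sepCount φ a b * (m - 2 - d) := by
    have h1 : Pairs.card = ∑ S ∈ A, c S := by
      rw [Finset.card_eq_sum_card_fiberwise (f := Prod.fst) (t := A) ?_]
      · exact Finset.sum_congr rfl fib1
      · intro p hp
        rw [hPairs, Finset.mem_coe, Finset.mem_filter, Finset.mem_product] at hp
        exact hp.1.1
    have h2 : Pairs.card = ∑ T ∈ B, (m - 2 - d) := by
      rw [Finset.card_eq_sum_card_fiberwise (f := Prod.snd) (t := B) ?_]
      · exact Finset.sum_congr rfl fib2
      · intro p hp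
        rw [hPairs, Finset.mem_coe, Finset.mem_filter, Finset.mem_product] at hp
        exact hp.1.2
    rw [← h1, h2, Finset.sum_const, smul_eq_mul]
    congr 1
    rw [sepCount_eq_card, hB]
  rw [step1, step2, step3]

lemma choose_even_of_even_odd {n k : ℕ} (hn : n % 2 = 0) (hk : k % 2 = 1) :
    Nat.choose n k % 2 = 0 := by
  rcases Nat.eq_zero_or_pos n with rfl | hn0
  · rw [Nat.choose_eq_zero_of_lt (by omega)]
  rcases Nat.eq_zero_or_pos k with rfl | hk0
  · omega
  obtain ⟨n', rfl⟩ : ∃ n', n = n' + 1 := ⟨n - 1, by omega⟩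
  obtain ⟨k', rfl⟩ : ∃ k', k = k' + 1 := ⟨k - 1, by omega⟩
  have hid := Nat.add_one_mul_choose_eq n' k'
  have heven : Even ((n' + 1).choose (k' + 1) * (k' + 1)) := by
    rw [← hid]
    exact (Nat.even_iff.2 hn).mul_right _
  rcases Nat.even_mul.1 heven with h | h
  · exact Nat.even_iff.1 h
  · exact absurd (Nat.even_iff.1 h) (by omega)

lemma choose_parity_pred {n k : ℕ} (hn : n % 2 = 1) (hk : k % 2 = 1) :
    Nat.choose n (k - 1) % 2 = Nat.choose n k % 2 := by
  obtain ⟨k', rfl⟩ : ∃ k', k = k' + 1 := ⟨k - 1, by omega⟩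
  have hp : (n + 1).choose (k' + 1) = n.choose k' + n.choose (k' + 1) :=
    Nat.choose_succ_succ' n k' ▸ (Nat.choose_succ_succ n k')
  have h0 : (n + 1).choose (k' + 1) % 2 = 0 :=
    choose_even_of_even_odd (by omega) hk
  rw [hp] at h0
  simp only [Nat.add_sub_cancel]
  omega


theorem stmt_17 {E : Type*} [Fintype E] [DecidableEq E] (d : ℕ) (hd : 1 ≤ d)
    (hcard : d + 2 ≤ Fintype.card E) (hpar : Fintype.card E % 2 ≠ d % 2)
    (φ : (Fin (d + 1) → E) → ℝ) (hgen : IsGenericFn φ) :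
    (IsSymmetricFn φ →
      ∀ x y : E, OrchardSym φ x y ↔ OrchardSym (Amap φ) x y) ∧
    (IsAntisymmetricFn φ →
      (Even d → ∀ x y : E, OrchardAnti φ x y ↔ OrchardSym (Amap φ) x y) ∧
      (Odd d → ∀ x y : E, OrchardAnti φ x y ↔ OrchardAnti (Amap φ) x y)) := by
  have key : QS φ → ∀ x y : E, x ≠ y →
      sepCount (Amap φ) x y % 2 = sepCount φ x y % 2 := by
    intro hqs x y hxy
    rw [sepCount_Amap_mod hqs hgen hxy]
    have hodd : (Fintype.card E - 2 - d) % 2 = 1 := by omega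
    rw [Nat.mul_mod, hodd, mul_one, Nat.mod_mod_of_dvd _ dvd_rfl]
  constructor
  · intro hsym x y
    by_cases hxy : x = y
    · simp [OrchardSym, hxy]
    · rw [OrchardSym, OrchardSym, key (qs_of_sym hsym) x y hxy]
  · intro hanti
    have hqs := qs_of_anti hanti
    constructor
    · intro hde x y
      by_cases hxy : x = y
      · simp [OrchardAnti, OrchardSym, hxy]
      · have hc0 : Nat.choose (Fintype.card E - 3) (d - 1) % 2 = 0 := by
          apply choose_even_of_even_odd
          · have := Nat.even_iff.1 hde; omega
          · have := Nat.even_iff.1 hde; omega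
        rw [OrchardAnti, OrchardSym, key hqs x y hxy, hc0]
    · intro hdo x y
      by_cases hxy : x = y
      · simp [OrchardAnti, hxy]
      · have hcc : Nat.choose (Fintype.card E - 3) (d - 1) % 2 =
            Nat.choose (Fintype.card E - 3) (d + 1 - 1) % 2 := by
          rw [show d + 1 - 1 = d from rfl]
          apply choose_parity_pred
          · have := Nat.odd_iff.1 hdo; omega
          · exact Nat.odd_iff.1 hdo
        rw [OrchardAnti, OrchardAnti, key hqs x y hxy, hcc]
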